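/- Let A : ℕ → ℕ be defined by A(0) = 1, A(1) = 2, and A(n) = 1 + C(A(n−2)+1, 2) + A(n−2)·(A(n−1) − A(n−2)) for n ≥ 2, and for n ≥ 2 let E(n) = log(1 + 1/(2·A(n−1)) − A(n−2)/(2·A(n−1)) + 1/(A(n−1)·A(n−2))). Let φ = (1+√5)/2. Then the series ∑_{i=2}^{∞} E(i)·φ^{1−i} converges absolutely (i.e., the function i ↦ E(i)·φ^{1−i} on {i : i ≥ 2} is summable). -/

import Mathlib

def A : ℕ → ℕ
  | 0 => 1
  | 1 => 2
  | n + 2 => 1 + Nat.choose (A n + 1) 2 + A n * (A (n + 1) - A n)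

noncomputable def E (n : ℕ) : ℝ :=
  Real.log (1 + 1 / (2 * (A (n - 1) : ℝ)) - (A (n - 2) : ℝ) / (2 * (A (n - 1) : ℝ))
    + 1 / ((A (n - 1) : ℝ) * (A (n - 2) : ℝ)))

noncomputable def φ : ℝ := (1 + Real.sqrt 5) / 2

lemma A_pos (n : ℕ) : 1 ≤ A n := by
  match n with
  | 0 => decide
  | 1 => decide
  | n + 2 =>
    show 1 ≤ 1 + Nat.choose (A n + 1) 2 + A n * (A (n + 1) - A n)
    exact le_trans (Nat.le_add_right 1 _) (Nat.le_add_right _ _)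

lemma A_lt (n : ℕ) : A n < A (n + 1) := by
  induction n with
  | zero => decide
  | succ n ih =>
    have hp : 1 ≤ A n := A_pos n
    have h1 : A n ≤ (A n + 1).choose 2 := by
      rw [Nat.choose_succ_succ, Nat.choose_one_right]
      exact Nat.le_add_right _ _
    have h2 : A (n + 1) - A n ≤ A n * (A (n + 1) - A n) :=
      Nat.le_mul_of_pos_left _ hp
    have h3 : A n + (A (n + 1) - A n) = A (n + 1) := Nat.add_sub_cancel' ih.le
    have h4 : A (n + 1 + 1) = 1 + (A n + 1).choose 2 + A n * (A (n + 1) - A n) := rfl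
    omega

lemma one_lt_phi : 1 < φ := by
  have h : (2:ℝ) < Real.sqrt 5 := by
    have : Real.sqrt 4 < Real.sqrt 5 := Real.sqrt_lt_sqrt (by norm_num) (by norm_num)
    rwa [show (4:ℝ) = 2^2 by norm_num, Real.sqrt_sq (by norm_num : (0:ℝ) ≤ 2)] at this
  unfold φ; linarith

lemma E_bound (i : ℕ) (hi : 2 ≤ i) : |E i| ≤ Real.log 2 := by
  have ha : 1 ≤ (A (i - 2) : ℝ) := by exact_mod_cast A_pos (i - 2)
  have hab : (A (i - 2) : ℝ) ≤ (A (i - 1) : ℝ) := by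
    have : i - 2 + 1 = i - 1 := by omega
    exact_mod_cast (this ▸ A_lt (i - 2)).le
  have hb : 1 ≤ (A (i - 1) : ℝ) := le_trans ha hab
  set a : ℝ := (A (i - 2) : ℝ)
  set b : ℝ := (A (i - 1) : ℝ)
  have hb0 : 0 < b := by linarith
  have ha0 : 0 < a := by linarith
  set x : ℝ := 1 + 1 / (2 * b) - a / (2 * b) + 1 / (b * a)
  have hxlo : (1:ℝ)/2 ≤ x := by
    have h1 : 0 ≤ 1 / (2 * b) := by positivity
    have h2 : 0 ≤ 1 / (b * a) := by positivity
    have h3 : a / (2 * b) ≤ 1 / 2 := by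
      rw [div_le_div_iff₀ (by linarith) (by norm_num)]
      linarith
    simp only [x]; linarith
  have hxhi : x ≤ 2 := by
    have h1 : 1 / (2 * b) ≤ a / (2 * b) := by
      apply div_le_div_of_nonneg_right ha (by linarith) |>.trans_eq rfl
    have h2 : 1 / (b * a) ≤ 1 := by
      rw [div_le_one (by positivity)]
      nlinarith
    simp only [x]; linarith
  have hx0 : 0 < x := lt_of_lt_of_le (by norm_num) hxlo
  have hE : E i = Real.log x := rfl
  rw [hE, abs_le]
  constructor
  · have : Real.log (1/2) ≤ Real.log x := Real.log_le_log (by norm_num) hxlo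
    rwa [show (1:ℝ)/2 = 2⁻¹ by norm_num, Real.log_inv, neg_le] at *
  · exact Real.log_le_log hx0 hxhi

theorem stmt_8 :
    Summable (fun i : {i : ℕ // 2 ≤ i} => E i * φ ^ (1 - (i : ℤ))) := by
  have hφ : 1 < φ := one_lt_phi
  have hφ0 : 0 < φ := by linarith
  have hr : |φ⁻¹| < 1 := by
    rw [abs_of_pos (by positivity)]
    exact inv_lt_one_of_one_lt₀ hφ
  have hg : Summable (fun i : ℕ => Real.log 2 * (φ * φ⁻¹ ^ i)) :=
    ((summable_geometric_of_lt_one (by positivity) (inv_lt_one_of_one_lt₀ hφ)).mul_left φ).mul_left _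
  have hgs := hg.subtype {i : ℕ | 2 ≤ i}
  apply Summable.of_norm_bounded hgs
  intro (i : {i : ℕ // 2 ≤ i})
  have hzp : φ ^ (1 - (i : ℤ)) = φ * φ⁻¹ ^ (i : ℕ) := by
    rw [zpow_sub₀ (ne_of_gt hφ0), zpow_one, zpow_natCast, inv_pow, div_eq_mul_inv]
  rw [norm_mul, hzp, Real.norm_eq_abs, Real.norm_eq_abs]
  have h1 : |E (i : ℕ)| ≤ Real.log 2 := E_bound i i.2
  have h2 : |φ * φ⁻¹ ^ (i : ℕ)| = φ * φ⁻¹ ^ (i : ℕ) := abs_of_pos (by positivity)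
  rw [h2]
  exact mul_le_mul_of_nonneg_right h1 (by positivity)
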